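/- arXiv:2605.30799 — 2 statements merged into one kernel-verified Lean document; each statement's English description precedes it below -/
import Mathlib

section
/- There exists a subset S of the semidihedral group SD(16) of order 16, with 1 ∉ S and S closed under inverses, such that the Cayley graph Cay(SD(16), S) is isomorphic to the Möbius–Kantor graph MK. -/
/-- The underlying relation of the Möbius–Kantor graph `GP(8,3)`. -/
def mkRel (v w : ZMod 8 × Fin 2) : Bool :=
  (v.2 == 0 && w.2 == 0 && (w.1 == v.1 + 1 || v.1 == w.1 + 1)) ||
  ((v.2 == 0 && w.2 == 1 || v.2 == 1 && w.2 == 0) && v.1 == w.1) ||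
  (v.2 == 1 && w.2 == 1 && (w.1 == v.1 + 3 || v.1 == w.1 + 3))

/-- The Möbius–Kantor graph, i.e. the generalized Petersen graph `GP(8,3)`. -/
def MK : SimpleGraph (ZMod 8 × Fin 2) where
  Adj v w := mkRel v w = true
  symm := by constructor; intro v w; revert v w; decide
  loopless := by constructor; intro v; revert v; decide

/-- The Cayley graph of a group `G` with respect to a connection set `S`
not containing `1` and closed under inverses. -/
def cayleyGraph {G : Type*} [Group G] (S : Set G)
    (h1 : (1 : G) ∉ S) (hinv : ∀ s ∈ S, s⁻¹ ∈ S) : SimpleGraph G where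
  Adj x y := x⁻¹ * y ∈ S
  symm := by
    constructor
    intro x y h
    have := hinv _ h
    simpa [_root_.mul_inv_rev] using this
  loopless := by
    constructor
    intro x h
    simp only [inv_mul_cancel] at h
    exact h1 h

/-- The automorphism `x ↦ 3x` of `Multiplicative (ZMod 8)`. -/
def sigma : MulAut (Multiplicative (ZMod 8)) where
  toFun x := Multiplicative.ofAdd (3 * x.toAdd)
  invFun x := Multiplicative.ofAdd (3 * x.toAdd)
  left_inv := by decide
  right_inv := by decide
  map_mul' x y := by
    show Multiplicative.ofAdd (3 * (x * y).toAdd)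
      = Multiplicative.ofAdd (3 * x.toAdd) * Multiplicative.ofAdd (3 * y.toAdd)
    rw [toAdd_mul, mul_add, ofAdd_add]

lemma sigma_sq : sigma * sigma = 1 := by
  ext x
  show Multiplicative.ofAdd (3 * (3 * x.toAdd)) = x
  have h : (3 : ZMod 8) * (3 * x.toAdd) = x.toAdd := by
    rw [← mul_assoc]
    norm_num
    rw [show (9 : ZMod 8) = 1 by decide, one_mul]
  rw [h]
  rfl

/-- The action of `ZMod 2` on `ZMod 8` where the nontrivial element acts by `x ↦ 3x`. -/
def sdAction : Multiplicative (ZMod 2) →* MulAut (Multiplicative (ZMod 8)) where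
  toFun g := if g.toAdd = 0 then 1 else sigma
  map_one' := by simp
  map_mul' x y := by
    have h : ∀ z : ZMod 2, z = 0 ∨ z = 1 := by decide
    have h2 : (1 + 1 : ZMod 2) = 0 := by decide
    have h10 : (1 : ZMod 2) ≠ 0 := by decide
    rcases h x.toAdd with hx | hx <;> rcases h y.toAdd with hy | hy <;>
      simp [toAdd_mul, hx, hy, h2, h10, sigma_sq]

/-- The semidihedral group `SD(16)`, as the semidirect product `(ZMod 8) ⋊ (ZMod 2)`
where the nontrivial element of `ZMod 2` acts by `x ↦ 3x`. -/
abbrev SD16 := SemidirectProduct (Multiplicative (ZMod 8)) (Multiplicative (ZMod 2)) sdAction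


def sdEquivProd : SD16 ≃ Multiplicative (ZMod 8) × Multiplicative (ZMod 2) where
  toFun g := (g.left, g.right)
  invFun p := ⟨p.1, p.2⟩
  left_inv g := rfl
  right_inv p := rfl

instance : DecidableEq SD16 := sdEquivProd.decidableEq
instance : Fintype SD16 := Fintype.ofEquiv _ sdEquivProd.symm

def genA : SD16 := ⟨Multiplicative.ofAdd 1, 1⟩
def genB : SD16 := ⟨1, Multiplicative.ofAdd 1⟩

def inS (g : SD16) : Bool := g = genA ∨ g = genA⁻¹ ∨ g = genB

def sdVert : SD16 ≃ ZMod 8 × Fin 2 where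
  toFun g := (g.left.toAdd, if g.right.toAdd = 0 then 0 else 1)
  invFun p := ⟨Multiplicative.ofAdd p.1, Multiplicative.ofAdd (if p.2 = 0 then 0 else 1)⟩
  left_inv := by decide
  right_inv := by decide

lemma key : ∀ a b : SD16, mkRel (sdVert a) (sdVert b) = true ↔ inS (a⁻¹ * b) = true := by
  decide

/-- The Möbius–Kantor graph is a Cayley graph of the semidihedral group `SD(16)`. -/
theorem moebiusKantor_cayley_semidihedral :
    ∃ (S : Set SD16) (h1 : (1 : SD16) ∉ S) (hinv : ∀ s ∈ S, s⁻¹ ∈ S),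
      Nonempty (cayleyGraph S h1 hinv ≃g MK) := by
  refine ⟨{g | inS g = true}, ?_, ?_, ⟨⟨sdVert, ?_⟩⟩⟩
  · simp only [Set.mem_setOf_eq]; decide
  · simp only [Set.mem_setOf_eq]; decide
  · intro a b
    show mkRel (sdVert a) (sdVert b) = true ↔ a⁻¹ * b ∈ {g | inS g = true}
    rw [Set.mem_setOf_eq]
    exact key a b
end

section
/- There exists a set M of 8 pairwise disjoint edges of the tesseract graph Q4 (a perfect matching) such that the graph obtained from Q4 by deleting the edges in M is isomorphic to the Möbius–Kantor graph MK. -/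
/-- The tesseract graph `Q4`: vertices are elements of `Fin 4 → ZMod 2`, two vertices
being adjacent iff they differ in exactly one coordinate. -/
def Q4 : SimpleGraph (Fin 4 → ZMod 2) where
  Adj v w := (Finset.univ.filter fun i => v i ≠ w i).card = 1
  symm := by
    constructor
    intro v w h
    beta_reduce at h ⊢
    have : (Finset.univ.filter fun i => w i ≠ v i)
        = (Finset.univ.filter fun i => v i ≠ w i) := by
      apply Finset.filter_congr
      intro i _
      exact ⟨Ne.symm, Ne.symm⟩
    rw [this]
    exact h
  loopless := by
    constructor
    intro v h
    simp at h

instance : DecidableRel Q4.Adj :=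
  fun v w => inferInstanceAs (Decidable ((Finset.univ.filter fun i => v i ≠ w i).card = 1))

/-- table from MK vertex index to Q4 vertex -/
def tbl : Fin 16 → Fin 4 → ZMod 2 := ![
  ![0,0,0,0],
  ![1,0,0,0],
  ![0,1,0,0],
  ![0,1,1,0],
  ![1,1,0,0],
  ![1,1,0,1],
  ![1,1,1,0],
  ![1,0,1,0],
  ![1,1,1,1],
  ![0,1,1,1],
  ![1,0,1,1],
  ![1,0,0,1],
  ![0,0,1,1],
  ![0,0,1,0],
  ![0,0,0,1],
  ![0,1,0,1]]

def vb (n : Fin 16) : Fin 4 → ZMod 2 := fun i => (n.val >>> i.val : ℕ)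

def invTbl : Fin 16 → ZMod 8 × Fin 2 := ![
  (0,0),
  (0,1),
  (1,0),
  (2,0),
  (6,1),
  (3,1),
  (1,1),
  (3,0),
  (7,0),
  (5,1),
  (7,1),
  (2,1),
  (6,0),
  (5,0),
  (4,1),
  (4,0)]

def mkToQ (v : ZMod 8 × Fin 2) : Fin 4 → ZMod 2 :=
  tbl ⟨v.1.val * 2 + v.2.val, by have h1 := v.1.val_lt; have h2 := v.2.isLt; omega⟩

def qToMK (w : Fin 4 → ZMod 2) : ZMod 8 × Fin 2 :=
  invTbl ⟨(w 0).val + 2 * (w 1).val + 4 * (w 2).val + 8 * (w 3).val, by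
    have h0 := (w 0).val_lt; have h1 := (w 1).val_lt
    have h2 := (w 2).val_lt; have h3 := (w 3).val_lt
    omega⟩

def Mset : Finset (Sym2 (Fin 4 → ZMod 2)) := {s(vb 0, vb 4), s(vb 1, vb 3), s(vb 2, vb 10), s(vb 5, vb 13), s(vb 6, vb 7), s(vb 8, vb 9), s(vb 11, vb 15), s(vb 12, vb 14)}

instance : DecidableRel MK.Adj := fun v w => instDecidableEqBool (mkRel v w) true

set_option maxRecDepth 40000 in
lemma key_s15 : ∀ a b : Fin 4 → ZMod 2,
    MK.Adj (qToMK a) (qToMK b) ↔ (Q4.Adj a b ∧ s(a, b) ∉ Mset) := by decide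

def mkEquiv : (ZMod 8 × Fin 2) ≃ (Fin 4 → ZMod 2) where
  toFun := mkToQ
  invFun := qToMK
  left_inv := by decide
  right_inv := by decide



set_option maxRecDepth 40000 in
/-- Deleting a suitable perfect matching of 8 pairwise disjoint edges from the
tesseract graph yields a graph isomorphic to the Möbius–Kantor graph. -/

theorem tesseract_minus_matching_iso_moebiusKantor :
    ∃ M : Finset (Sym2 (Fin 4 → ZMod 2)),
      M ⊆ Q4.edgeFinset ∧
      M.card = 8 ∧
      (∀ e ∈ M, ∀ f ∈ M, e ≠ f → ∀ v, v ∈ e → v ∉ f) ∧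
      Nonempty (Q4.deleteEdges (M : Set (Sym2 (Fin 4 → ZMod 2))) ≃g MK) := by
  refine ⟨Mset, ?_, ?_, ?_, ⟨⟨mkEquiv.symm, ?_⟩⟩⟩
  · decide
  · decide
  · decide
  · intro a b
    simp only [SimpleGraph.deleteEdges_adj, Set.mem_setOf_eq, Finset.mem_coe]
    exact key_s15 a b
end
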